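/- Let G be a bipartite graph and C a cycle of even length 2m ≥ 6 in G. Let u ∈ V(G)\V(C) be adjacent to all m vertices of C in one part, and let w ∈ V(G)\V(C) be adjacent to at least m − 1 of the m vertices of C in the other part. Then there exist an edge v v⁺ of C such that the graph induced on (V(C) ∪ {u, w}) \ {v, v⁺} contains a cycle of length 2m (replacing v, v⁺ on C by u and w). -/

import Mathlib

open SimpleGraph List

namespace SpliceAux

variable {V : Type*} {G : SimpleGraph V}

lemma support_eq_map_getVert {a b : V} (p : G.Walk a b) :
    p.support = (List.range (p.length + 1)).map p.getVert := by
  induction p with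
  | nil => simp [SimpleGraph.Walk.getVert]
  | @cons x y z h p ih =>
    rw [Walk.support_cons, Walk.length_cons]
    conv_rhs => rw [List.range_succ_eq_map]
    rw [List.map_cons, List.map_map, ih]
    congr 1

lemma cycle_getVert_injOn {a : V} {c : G.Walk a a} (hc : c.IsCycle) :
    ∀ i j, 1 ≤ i → i ≤ c.length → 1 ≤ j → j ≤ c.length → c.getVert i = c.getVert j → i = j := by
  have hnd := hc.2
  have hsupp := support_eq_map_getVert c
  have htail : c.support.tail = (List.range c.length).map (fun i => c.getVert (i + 1)) := by
    rw [hsupp, List.range_succ_eq_map]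
    simp [List.map_map, Function.comp]
  rw [htail] at hnd
  rw [List.nodup_map_iff_inj_on List.nodup_range] at hnd
  intro i j hi hil hj hjl hij
  obtain ⟨i', rfl⟩ : ∃ i', i = i' + 1 := ⟨i - 1, by omega⟩
  obtain ⟨j', rfl⟩ : ∃ j', j = j' + 1 := ⟨j - 1, by omega⟩
  have := hnd i' (List.mem_range.2 (by omega)) j' (List.mem_range.2 (by omega)) hij
  omega

lemma edge_getVert_mem_edges {a b : V} (p : G.Walk a b) :
    ∀ i < p.length, s(p.getVert i, p.getVert (i + 1)) ∈ p.edges := by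
  induction p with
  | nil => intro i hi; simp at hi
  | @cons x y z h p ih =>
    intro i hi
    cases i with
    | zero => simp [Walk.getVert_zero, Walk.getVert_cons_succ]
    | succ n =>
      rw [Walk.length_cons] at hi
      simp only [Walk.getVert_cons_succ, Walk.edges_cons, List.mem_cons]
      exact Or.inr (ih n (by omega))

lemma length_rotate' [DecidableEq V] {a v : V} (c : G.Walk a a) (h : v ∈ c.support) :
    (c.rotate v h).length = c.length := by
  have h2 := congrArg Walk.length (Walk.take_spec c h)
  rw [Walk.length_append] at h2
  show ((c.dropUntil v h).append (c.takeUntil v h)).length = c.length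
  rw [Walk.length_append]
  omega

/-- Walk along an index function. -/
def walkFn (G : SimpleGraph V) (f : ℕ → V) :
    (n : ℕ) → (∀ i < n, G.Adj (f i) (f (i + 1))) → G.Walk (f 0) (f n)
  | 0, _ => Walk.nil
  | n + 1, hadj => (walkFn G f n (fun i hi => hadj i (by omega))).concat (hadj n (by omega))

@[simp] lemma walkFn_length (f : ℕ → V) (n : ℕ) (h : ∀ i < n, G.Adj (f i) (f (i + 1))) :
    (walkFn G f n h).length = n := by
  induction n with
  | zero => rfl
  | succ n ih => simp [walkFn, ih]

@[simp] lemma walkFn_support (f : ℕ → V) (n : ℕ) (h : ∀ i < n, G.Adj (f i) (f (i + 1))) :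
    (walkFn G f n h).support = (List.range (n + 1)).map f := by
  induction n with
  | zero => simp [walkFn, List.range_succ]
  | succ n ih =>
    rw [walkFn, Walk.support_concat, ih, List.range_succ (n := n + 1)]
    simp

@[simp] lemma walkFn_edges (f : ℕ → V) (n : ℕ) (h : ∀ i < n, G.Adj (f i) (f (i + 1))) :
    (walkFn G f n h).edges = (List.range n).map (fun i => s(f i, f (i + 1))) := by
  induction n with
  | zero => simp [walkFn]
  | succ n ih =>
    rw [walkFn, Walk.edges_concat, ih, List.range_succ (n := n)]
    simp

/-- Alternation along a walk in a bipartite graph. -/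
lemma alternate {X Y : Finset V} (hdisj : Disjoint X Y)
    (hbip : ∀ a b, G.Adj a b → (a ∈ X ∧ b ∈ Y) ∨ (a ∈ Y ∧ b ∈ X))
    {a b : V} (p : G.Walk a b) (ha : a ∈ X) :
    ∀ i ≤ p.length, (Even i → p.getVert i ∈ X) ∧ (¬ Even i → p.getVert i ∈ Y) := by
  intro i
  induction i with
  | zero => intro _; simpa [Walk.getVert_zero] using ha
  | succ n ih =>
    intro hn
    have hadj := p.adj_getVert_succ (i := n) (by omega)
    have ihn := ih (by omega)
    have hXY : ∀ z, z ∈ X → z ∈ Y → False := fun z h1 h2 => Finset.disjoint_left.mp hdisj h1 h2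
    rcases hbip _ _ hadj with ⟨h1, h2⟩ | ⟨h1, h2⟩
    · have hev : Even n := by
        by_contra hod
        exact hXY _ h1 (ihn.2 hod)
      exact ⟨fun hpar => absurd hev (Nat.even_add_one.mp hpar), fun _ => h2⟩
    · have hod : ¬ Even n := fun hev => hXY _ (ihn.1 hev) h1
      exact ⟨fun _ => h2, fun hpar => absurd (Nat.even_add_one.mpr hod) hpar⟩

lemma mem_support_tail_iff {a : V} (c : G.Walk a a) (h0 : 0 < c.length) :
    ∀ z, z ∈ c.support.tail ↔ z ∈ c.support := by
  intro z
  rw [support_eq_map_getVert c]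
  have htail : ((List.range (c.length + 1)).map c.getVert).tail
      = (List.range c.length).map (fun i => c.getVert (i + 1)) := by
    rw [List.range_succ_eq_map]
    simp [List.map_map, Function.comp]
  rw [htail]
  simp only [List.mem_map, List.mem_range]
  constructor
  · rintro ⟨i, hi, rfl⟩
    exact ⟨i + 1, by omega, rfl⟩
  · rintro ⟨i, hi, rfl⟩
    rcases Nat.eq_zero_or_pos i with rfl | hpos
    · refine ⟨c.length - 1, by omega, ?_⟩
      rw [show c.length - 1 + 1 = c.length from by omega, c.getVert_length, c.getVert_zero]
    · exact ⟨i - 1, by omega, by rw [show i - 1 + 1 = i from by omega]⟩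

end SpliceAux

open SpliceAux in
theorem splice_two_vertices_into_cycle {V : Type*} [DecidableEq V]
    (G : SimpleGraph V) [DecidableRel G.Adj]
    (X Y : Finset V) (hdisj : Disjoint X Y) (hcover : ∀ z : V, z ∈ X ∨ z ∈ Y)
    (hbip : ∀ a b, G.Adj a b → (a ∈ X ∧ b ∈ Y) ∨ (a ∈ Y ∧ b ∈ X))
    (m : ℕ) (hm : 3 ≤ m)
    (v₀ : V) (c : G.Walk v₀ v₀) (hc : c.IsCycle) (hlen : c.length = 2 * m)
    (u w : V) (hu : u ∉ c.support) (hw : w ∉ c.support) (huw : u ≠ w)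
    (huX : u ∈ X) (hwY : w ∈ Y)
    (hadju : ∀ z ∈ c.support, z ∈ Y → G.Adj u z)
    (hadjw : m - 1 ≤ ((c.support.toFinset ∩ X).filter (fun z => G.Adj w z)).card) :
    ∃ v₁ v₂, s(v₁, v₂) ∈ c.edges ∧
      ∃ (w₀ : V) (d : G.Walk w₀ w₀), d.IsCycle ∧ d.length = 2 * m ∧
        ∀ x ∈ d.support, (x ∈ c.support ∨ x = u ∨ x = w) ∧ x ≠ v₁ ∧ x ≠ v₂ := by
  classical
  have hXY : ∀ z, z ∈ X → z ∉ Y := fun z h1 h2 => Finset.disjoint_left.mp hdisj h1 h2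
  have hcinj := cycle_getVert_injOn hc
  have hcinj' : ∀ i j, 1 ≤ i → i ≤ 2*m → 1 ≤ j → j ≤ 2*m → c.getVert i = c.getVert j → i = j := by
    intro i j h1 h2 h3 h4 he
    exact hcinj i j h1 (by omega) h3 (by omega) he
  -- parity pattern for X-membership along c
  obtain ⟨r, hr2, hparX⟩ : ∃ r, r < 2 ∧ ∀ i ≤ 2*m, (c.getVert i ∈ X ↔ i % 2 = r) := by
    rcases hcover v₀ with hv | hv
    · refine ⟨0, by omega, fun i hi => ?_⟩
      have halt := alternate hdisj hbip c hv i (by omega)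
      constructor
      · intro hx
        by_contra hodd
        have hY := halt.2 (by rwa [Nat.even_iff])
        exact hXY _ hx hY
      · intro hev
        exact halt.1 (Nat.even_iff.mpr hev)
    · have hbip' : ∀ a b, G.Adj a b → (a ∈ Y ∧ b ∈ X) ∨ (a ∈ X ∧ b ∈ Y) :=
        fun a b hab => (hbip a b hab).symm
      refine ⟨1, by omega, fun i hi => ?_⟩
      have halt := alternate hdisj.symm hbip' c hv i (by omega)
      constructor
      · intro hx
        by_contra hodd
        have hY := halt.1 (by rw [Nat.even_iff]; omega)
        exact hXY _ hx hY
      · intro hod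
        exact halt.2 (by rw [Nat.even_iff]; omega)
  -- the set of X-vertices of c has exactly m elements
  have hL0 : c.getVert (2*m) = v₀ := by rw [← hlen]; exact c.getVert_length
  have himg : c.support.toFinset ∩ X =
      (Finset.range m).image (fun t => c.getVert (2*t + 2 - r)) := by
    ext z
    simp only [Finset.mem_inter, List.mem_toFinset, Finset.mem_image, Finset.mem_range]
    constructor
    · rintro ⟨hzs, hzX⟩
      obtain ⟨n, hn, hnle⟩ := Walk.mem_support_iff_exists_getVert.mp hzs
      rw [hlen] at hnle
      have hpar : n % 2 = r := (hparX n hnle).mp (hn ▸ hzX)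
      rcases Nat.eq_zero_or_pos n with h0 | h0
      · refine ⟨m - 1, by omega, ?_⟩
        have : 2*(m-1) + 2 - r = 2*m := by omega
        rw [this, hL0, ← hn, h0, c.getVert_zero]
      · refine ⟨(n + r - 2)/2, by omega, ?_⟩
        have : 2*((n + r - 2)/2) + 2 - r = n := by omega
        rw [this, hn]
    · rintro ⟨t, ht, rfl⟩
      refine ⟨Walk.mem_support_iff_exists_getVert.mpr ⟨2*t + 2 - r, rfl, by omega⟩, ?_⟩
      exact (hparX _ (by omega)).mpr (by omega)
  have hXm : (c.support.toFinset ∩ X).card = m := by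
    rw [himg]
    rw [Finset.card_image_of_injOn, Finset.card_range]
    intro t ht s hs he
    simp only [Finset.coe_range, Set.mem_Iio] at ht hs
    have := hcinj' (2*t + 2 - r) (2*s + 2 - r) (by omega) (by omega) (by omega) (by omega) he
    omega
  -- find the bad vertex b
  set A := c.support.toFinset ∩ X with hAdef
  set S := A.filter (fun z => G.Adj w z) with hSdef
  have hSA : S ⊆ A := Finset.filter_subset _ _
  have hTcard : (A \ S).card ≤ 1 := by
    have h1 := Finset.card_sdiff_of_subset hSA
    have h2 : S.card ≤ A.card := Finset.card_le_card hSA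
    omega
  obtain ⟨b, hbA, hball⟩ :
      ∃ b ∈ A, ∀ z ∈ c.support, z ∈ X → z ≠ b → G.Adj w z := by
    by_cases hT : (A \ S).Nonempty
    · obtain ⟨b, hbT⟩ := hT
      refine ⟨b, (Finset.mem_sdiff.mp hbT).1, ?_⟩
      intro z hz hzX hzb
      by_contra hadj
      have hzT : z ∈ A \ S := by
        rw [Finset.mem_sdiff]
        refine ⟨Finset.mem_inter.mpr ⟨List.mem_toFinset.mpr hz, hzX⟩, ?_⟩
        rw [hSdef, Finset.mem_filter]
        tauto
      have hsub : ({z, b} : Finset V) ⊆ A \ S := by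
        intro x hx
        rcases Finset.mem_insert.mp hx with rfl | hx
        · exact hzT
        · rw [Finset.mem_singleton] at hx; exact hx ▸ hbT
      have := Finset.card_le_card hsub
      rw [Finset.card_insert_of_notMem (by simpa using hzb), Finset.card_singleton] at this
      omega
    · have hA0 : A.Nonempty := Finset.card_pos.mp (by omega)
      obtain ⟨b, hbA⟩ := hA0
      refine ⟨b, hbA, fun z hz hzX _ => ?_⟩
      have hzA : z ∈ A := Finset.mem_inter.mpr ⟨List.mem_toFinset.mpr hz, hzX⟩
      have hzS : z ∈ S := by
        by_contra hzS
        exact hT ⟨z, Finset.mem_sdiff.mpr ⟨hzA, hzS⟩⟩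
      exact (Finset.mem_filter.mp hzS).2
  have hbmem : b ∈ c.support := List.mem_toFinset.mp (Finset.mem_inter.mp hbA).1
  have hbX : b ∈ X := (Finset.mem_inter.mp hbA).2
  -- rotate the cycle to start at b
  set c₂ := c.rotate b hbmem with hc₂def
  have hc₂ : c₂.IsCycle := hc.rotate hbmem
  have hlen₂ : c₂.length = 2*m := by
    rw [hc₂def, SpliceAux.length_rotate']; exact hlen
  have hmemiff : ∀ z, z ∈ c₂.support ↔ z ∈ c.support := by
    intro z
    rw [← mem_support_tail_iff c₂ (by omega), ← mem_support_tail_iff c (by omega)]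
    exact (Walk.support_rotate c b hbmem).mem_iff
  set g : ℕ → V := c₂.getVert with hgdef
  have hg0 : g 0 = b := c₂.getVert_zero
  have hgL : g (2*m) = b := by
    rw [hgdef, ← hlen₂]; exact c₂.getVert_length
  have hg02 : g 0 = g (2*m) := by rw [hg0, hgL]
  have gadj : ∀ i < 2*m, G.Adj (g i) (g (i+1)) :=
    fun i hi => c₂.adj_getVert_succ (by omega)
  have ginj := cycle_getVert_injOn hc₂
  have ginj' : ∀ i j, 1 ≤ i → i ≤ 2*m → 1 ≤ j → j ≤ 2*m → g i = g j → i = j := by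
    intro i j h1 h2 h3 h4 he
    exact ginj i j h1 (by omega) h3 (by omega) he
  have gmem : ∀ i ≤ 2*m, g i ∈ c.support := fun i hi =>
    (hmemiff _).mp (Walk.mem_support_iff_exists_getVert.mpr ⟨i, rfl, by omega⟩)
  have galt := alternate hdisj hbip c₂ hbX
  have galtX : ∀ i ≤ 2*m, Even i → g i ∈ X :=
    fun i hi he => (galt i (by omega)).1 he
  have galtY : ∀ i ≤ 2*m, ¬Even i → g i ∈ Y :=
    fun i hi he => (galt i (by omega)).2 he
  have gadju : ∀ i ≤ 2*m, ¬ Even i → G.Adj u (g i) :=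
    fun i hi ho => hadju _ (gmem i hi) (galtY i hi ho)
  have gadjw : ∀ i, 2 ≤ i → i < 2*m → Even i → G.Adj w (g i) := by
    intro i h2 hlt he
    apply hball _ (gmem i (by omega)) (galtX i (by omega) he)
    intro hbeq
    have : i = 2*m := ginj' i (2*m) (by omega) (by omega) (by omega) (by omega)
      (by rw [hbeq, ← hgL])
    omega
  have gu : ∀ i ≤ 2*m, g i ≠ u := fun i hi he => hu (he ▸ gmem i hi)
  have gw : ∀ i ≤ 2*m, g i ≠ w := fun i hi he => hw (he ▸ gmem i hi)
  -- the new vertex sequence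
  set h : ℕ → V := fun i =>
    if i = 0 then g 2 else if i = 1 then g 3 else if i = 2 then u
    else if i ≤ 2*m - 2 then g (2*m + 2 - i) else if i = 2*m - 1 then w else g 2
    with hhdef
  have hh0 : h 0 = g 2 := by simp [hhdef]
  have hh1 : h 1 = g 3 := by simp [hhdef]
  have hh2 : h 2 = u := by simp [hhdef]
  have hhmid : ∀ i, 3 ≤ i → i ≤ 2*m - 2 → h i = g (2*m + 2 - i) := by
    intro i h3 h4
    simp only [hhdef]
    split_ifs <;> first | rfl | (exfalso; omega)
  have hhw : h (2*m - 1) = w := by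
    simp only [hhdef]
    split_ifs <;> first | rfl | (exfalso; omega)
  have hhL : h (2*m) = g 2 := by
    simp only [hhdef]
    split_ifs <;> first | rfl | (exfalso; omega)
  have hh2m0 : h (2*m) = h 0 := by rw [hhL, hh0]
  -- index decoding for the "generic" values
  set idx : ℕ → ℕ := fun i => if i = 0 then 2 else if i = 1 then 3 else 2*m + 2 - i
    with hidxdef
  have hidxval : ∀ i < 2*m, i ≠ 2 → i ≠ 2*m - 1 → h i = g (idx i) := by
    intro i hi hi2 hiw
    simp only [hhdef, hidxdef]
    split_ifs <;> first | rfl | (exfalso; omega)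
  have hidxbd : ∀ i < 2*m, i ≠ 2 → i ≠ 2*m - 1 → 2 ≤ idx i ∧ idx i ≤ 2*m - 1 := by
    intro i hi hi2 hiw
    simp only [hidxdef]
    split_ifs <;> omega
  have hidxinj : ∀ i j, i < 2*m → j < 2*m → i ≠ 2 → i ≠ 2*m-1 → j ≠ 2 → j ≠ 2*m-1 →
      idx i = idx j → i = j := by
    intro i j hi hj hi2 hiw hj2 hjw he
    simp only [hidxdef] at he
    split_ifs at he <;> omega
  -- adjacency along h
  have hadjh : ∀ i < 2*m, G.Adj (h i) (h (i+1)) := by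
    intro i hi
    rcases Nat.lt_or_ge i 3 with h3 | h3
    · interval_cases i
      · rw [hh0, hh1]; exact gadj 2 (by omega)
      · rw [hh1, hh2]; exact (gadju 3 (by omega) (by decide)).symm
      · rw [hh2]
        have h3eq : h 3 = g (2*m - 1) := by
          rw [hhmid 3 le_rfl (by omega), show 2*m + 2 - 3 = 2*m - 1 from by omega]
        rw [show (2 : ℕ) + 1 = 3 from rfl, h3eq]
        exact gadju (2*m - 1) (by omega) (by rw [Nat.even_iff]; omega)
    · rcases Nat.lt_or_ge i (2*m - 2) with h4 | h4
      · rw [hhmid i h3 (by omega), hhmid (i+1) (by omega) (by omega)]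
        have hstep := gadj (2*m + 1 - i) (by omega)
        have heq1 : 2*m + 1 - i + 1 = 2*m + 2 - i := by omega
        have heq2 : 2*m + 2 - (i+1) = 2*m + 1 - i := by omega
        rw [heq1] at hstep
        rw [heq2]
        exact hstep.symm
      · have : i = 2*m - 2 ∨ i = 2*m - 1 := by omega
        rcases this with h5 | h5 <;> subst h5
        · have hieq : h (2*m - 2) = g 4 := by
            rw [hhmid (2*m - 2) (by omega) le_rfl]; congr 1; omega
          have hieq2 : (2*m - 2) + 1 = 2*m - 1 := by omega
          rw [hieq, hieq2, hhw]
          exact (gadjw 4 (by omega) (by omega) (by decide)).symm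
        · have hieq2 : (2*m - 1) + 1 = 2*m := by omega
          rw [hhw, hieq2, hhL]
          exact gadjw 2 le_rfl (by omega) (by decide)
  -- injectivity of h
  have hinj : ∀ i j, i < 2*m → j < 2*m → h i = h j → i = j := by
    intro i j hi hj he
    by_cases hi2 : i = 2
    · subst hi2
      by_cases hj2 : j = 2
      · omega
      · by_cases hjw : j = 2*m - 1
        · rw [hh2, hjw, hhw] at he; exact absurd he huw
        · rw [hh2, hidxval j hj hj2 hjw] at he
          exact absurd he.symm (gu (idx j) (by have := hidxbd j hj hj2 hjw; omega))
    · by_cases hiw : i = 2*m - 1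
      · by_cases hj2 : j = 2
        · rw [hiw, hhw, hj2, hh2] at he; exact absurd he.symm huw
        · by_cases hjw : j = 2*m - 1
          · omega
          · rw [hiw, hhw, hidxval j hj hj2 hjw] at he
            exact absurd he.symm (gw (idx j) (by have := hidxbd j hj hj2 hjw; omega))
      · by_cases hj2 : j = 2
        · rw [hidxval i hi hi2 hiw, hj2, hh2] at he
          exact absurd he (gu (idx i) (by have := hidxbd i hi hi2 hiw; omega))
        · by_cases hjw : j = 2*m - 1
          · rw [hidxval i hi hi2 hiw, hjw, hhw] at he
            exact absurd he (gw (idx i) (by have := hidxbd i hi hi2 hiw; omega))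
          · rw [hidxval i hi hi2 hiw, hidxval j hj hj2 hjw] at he
            have hbi := hidxbd i hi hi2 hiw
            have hbj := hidxbd j hj hj2 hjw
            exact hidxinj i j hi hj hi2 hiw hj2 hjw
              (ginj' _ _ (by omega) (by omega) (by omega) (by omega) he)
  have hinj0 : ∀ i, 1 ≤ i → i < 2*m → h i ≠ h 0 := by
    intro i h1 h2 he
    exact absurd (hinj i 0 h2 (by omega) he) (by omega)
  -- build the new cycle
  have hadjk : ∀ i < 2*m - 1, G.Adj ((fun j => h (j+1)) i) ((fun j => h (j+1)) (i+1)) :=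
    fun i hi => hadjh (i+1) (by omega)
  have hqcast : (fun j => h (j+1)) (2*m - 1) = h 0 := by
    show h (2*m - 1 + 1) = h 0
    rw [show 2*m - 1 + 1 = 2*m from by omega, hh2m0]
  set q : G.Walk (h 1) (h 0) :=
    (walkFn G (fun j => h (j+1)) (2*m - 1) hadjk).copy rfl hqcast with hqdef
  have hqsupp : q.support = (List.range (2*m)).map (fun j => h (j+1)) := by
    rw [hqdef, Walk.support_copy, walkFn_support, show 2*m - 1 + 1 = 2*m from by omega]
  have hqedges : q.edges = (List.range (2*m - 1)).map (fun i => s(h (i+1), h (i+2))) := by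
    rw [hqdef, Walk.edges_copy, walkFn_edges]
  have hqlen : q.length = 2*m - 1 := by
    rw [hqdef, Walk.length_copy, walkFn_length]
  have hadj01 : G.Adj (h 0) (h 1) := hadjh 0 (by omega)
  set d := Walk.cons hadj01 q with hddef
  have hqpath : q.IsPath := by
    rw [Walk.isPath_def, hqsupp]
    rw [List.nodup_map_iff_inj_on List.nodup_range]
    intro x hx y hy he
    rw [List.mem_range] at hx hy
    by_cases hx2 : x + 1 = 2*m
    · by_cases hy2 : y + 1 = 2*m
      · omega
      · rw [hx2, hh2m0] at he
        exact absurd he.symm (hinj0 (y+1) (by omega) (by omega))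
    · by_cases hy2 : y + 1 = 2*m
      · rw [hy2, hh2m0] at he
        exact absurd he (hinj0 (x+1) (by omega) (by omega))
      · have := hinj (x+1) (y+1) (by omega) (by omega) he
        omega
  have hnotmem : ¬ s(h 0, h 1) ∈ q.edges := by
    rw [hqedges]
    intro hmem
    rw [List.mem_map] at hmem
    obtain ⟨i, hi, he⟩ := hmem
    rw [List.mem_range] at hi
    rw [Sym2.eq_iff] at he
    rcases he with ⟨he1, he2⟩ | ⟨he1, he2⟩
    · exact hinj0 (i+1) (by omega) (by omega) he1
    · by_cases hii : i + 2 = 2*m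
      · rw [show i + 1 = 2*m - 1 from by omega, hhw, hh1] at he1
        exact gw 3 (by omega) he1.symm
      · exact hinj0 (i+2) (by omega) (by omega) he2
  have hdcyc : d.IsCycle := (Walk.cons_isCycle_iff q hadj01).mpr ⟨hqpath, hnotmem⟩
  have hdlen : d.length = 2*m := by
    rw [hddef, Walk.length_cons, hqlen]
    omega
  -- the good-vertex property
  have hgood : ∀ k, 2 ≤ k → k ≤ 2*m - 1 →
      (g k ∈ c.support ∨ g k = u ∨ g k = w) ∧ g k ≠ g 0 ∧ g k ≠ g 1 := by
    intro k h2 h3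
    refine ⟨Or.inl (gmem k (by omega)), ?_, ?_⟩
    · intro he
      rw [hg02] at he
      have := ginj' k (2*m) (by omega) (by omega) (by omega) (by omega) he
      omega
    · intro he
      have := ginj' k 1 (by omega) (by omega) (by omega) (by omega) he
      omega
  have hx : ∀ i ≤ 2*m, (h i ∈ c.support ∨ h i = u ∨ h i = w) ∧ h i ≠ g 0 ∧ h i ≠ g 1 := by
    intro i hi
    by_cases hi2 : i = 2
    · subst hi2
      rw [hh2]
      refine ⟨Or.inr (Or.inl rfl), ?_, ?_⟩
      · intro he; exact hu (he ▸ gmem 0 (by omega))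
      · intro he; exact hu (he ▸ gmem 1 (by omega))
    · by_cases hiw : i = 2*m - 1
      · subst hiw
        rw [hhw]
        refine ⟨Or.inr (Or.inr rfl), ?_, ?_⟩
        · intro he; exact hw (he ▸ gmem 0 (by omega))
        · intro he; exact hw (he ▸ gmem 1 (by omega))
      · by_cases hiL : i = 2*m
        · subst hiL
          rw [hhL]
          exact hgood 2 le_rfl (by omega)
        · rw [hidxval i (by omega) hi2 hiw]
          have := hidxbd i (by omega) hi2 hiw
          exact hgood (idx i) this.1 this.2
  -- the cycle edge to remove
  have hedge : s(g 0, g 1) ∈ c.edges := by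
    have h01 := edge_getVert_mem_edges c₂ 0 (by omega)
    rw [c₂.getVert_zero] at h01
    have := (Walk.rotate_edges c b hbmem).mem_iff (a := s(g 0, g 1))
    rw [← this]
    rw [hg0]
    exact h01
  refine ⟨g 0, g 1, hedge, h 0, d, hdcyc, hdlen, ?_⟩
  intro x hxmem
  rw [hddef, Walk.support_cons] at hxmem
  rcases List.mem_cons.mp hxmem with rfl | hxmem
  · exact hx 0 (by omega)
  · rw [hqsupp, List.mem_map] at hxmem
    obtain ⟨i, hi, rfl⟩ := hxmem
    rw [List.mem_range] at hi
    exact hx (i+1) (by omega)
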